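/- Let R be a discrete valuation ring with fraction field Q and G a finite group acting on R[[X]] by R-algebra automorphisms with g(X) = (unit)·X for every g. If Q((X))^G = Q((Y)) with Y = ∏_{g∈G} g(X), then R[[X]]^G = R[[Y]], since both are integrally closed in Q((Y)) ⊆ Q((X)) and one contains the other. -/

import Mathlib

open PowerSeries

section Aux

variable {S : Type*} [CommRing S]

private lemma aux_nat_mul_lt {i j : ℕ} (k : ℕ) (h : i < j) (hk : 0 < k) : i * k < j * k := by
  have h1 : (i + 1) * k ≤ j * k := Nat.mul_le_mul_right k h
  have h2 : (i + 1) * k = i * k + k := by rw [Nat.add_mul, one_mul]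
  omega

private lemma aux_coeff_pow_mul_eq_zero (V : PowerSeries S) (k i m : ℕ)
    (q : PowerSeries S) (hm : m < i * k) :
    PowerSeries.coeff m ((V * X ^ k) ^ i * q) = 0 := by
  have hdvd : (X : PowerSeries S) ^ (i * k) ∣ (V * X ^ k) ^ i * q := by
    refine dvd_mul_of_dvd_left ?_ q
    rw [mul_pow, ← pow_mul']
    exact dvd_mul_left _ _
  exact PowerSeries.X_pow_dvd_iff.mp hdvd m hm

private lemma aux_coeff_partial_sum (V : PowerSeries S) (k : ℕ) (hk : 0 < k) (c : ℕ → S)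
    (m A B : ℕ) (hm : m < A * k) (hAB : A ≤ B) :
    PowerSeries.coeff m (∑ i ∈ Finset.range A, C (c i) * (V * X ^ k) ^ i)
      = PowerSeries.coeff m (∑ i ∈ Finset.range B, C (c i) * (V * X ^ k) ^ i) := by
  rw [map_sum, map_sum]
  refine Finset.sum_subset (Finset.range_subset_range.mpr hAB) ?_
  intro i hiB hiA
  rw [Finset.mem_range, not_lt] at hiA
  rw [mul_comm]
  exact aux_coeff_pow_mul_eq_zero V k i m _
    (lt_of_lt_of_le hm (Nat.mul_le_mul_right k hiA))

private lemma aux_rep (V : (PowerSeries S)ˣ) (k : ℕ) (hk : 0 < k) (c : ℕ → S)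
    (P : PowerSeries S)
    (h : ∀ m : ℕ, PowerSeries.coeff m P
      = PowerSeries.coeff m
          (∑ i ∈ Finset.range (m + 1), C (c i) * ((V : PowerSeries S) * X ^ k) ^ i)) :
    ∀ N : ℕ, ∃ q : PowerSeries S,
      P = ∑ i ∈ Finset.range N, C (c i) * ((V : PowerSeries S) * X ^ k) ^ i
        + ((V : PowerSeries S) * X ^ k) ^ N * q := by
  intro N
  induction N with
  | zero => exact ⟨P, by simp⟩
  | succ N ih =>
    obtain ⟨q, hq⟩ := ih
    have key : ∀ m, m < (N + 1) * k →
        PowerSeries.coeff m (((V : PowerSeries S) * X ^ k) ^ N * (q - C (c N))) = 0 := by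
      intro m hm
      have h1 : ((V : PowerSeries S) * X ^ k) ^ N * (q - C (c N))
          = P - ∑ i ∈ Finset.range (N + 1), C (c i) * ((V : PowerSeries S) * X ^ k) ^ i := by
        rw [hq, Finset.sum_range_succ]; ring
      have h2 : PowerSeries.coeff m
            (∑ i ∈ Finset.range (N + 1), C (c i) * ((V : PowerSeries S) * X ^ k) ^ i)
          = PowerSeries.coeff m
            (∑ i ∈ Finset.range (m + 1), C (c i) * ((V : PowerSeries S) * X ^ k) ^ i) := by
        rcases le_total (N + 1) (m + 1) with hle | hle
        · exact aux_coeff_partial_sum _ k hk c m (N + 1) (m + 1) hm hle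
        · exact (aux_coeff_partial_sum _ k hk c m (m + 1) (N + 1)
            (lt_of_lt_of_le (Nat.lt_succ_self m) (Nat.le_mul_of_pos_right _ hk)) hle).symm
      rw [h1, map_sub, h m, h2, sub_self]
    have hdvd : (X : PowerSeries S) ^ ((N + 1) * k)
        ∣ ((V : PowerSeries S) * X ^ k) ^ N * (q - C (c N)) :=
      PowerSeries.X_pow_dvd_iff.mpr key
    have hdvd2 : (X : PowerSeries S) ^ ((N + 1) * k)
        ∣ ((V⁻¹ : (PowerSeries S)ˣ) : PowerSeries S) ^ N
            * (((V : PowerSeries S) * X ^ k) ^ N * (q - C (c N))) :=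
      hdvd.mul_left _
    have hVV : ((V⁻¹ : (PowerSeries S)ˣ) : PowerSeries S) ^ N * (V : PowerSeries S) ^ N = 1 := by
      rw [← mul_pow, Units.inv_mul, one_pow]
    have hZN : ((V : PowerSeries S) * X ^ k) ^ N
        = (V : PowerSeries S) ^ N * X ^ (N * k) := by
      rw [mul_pow, ← pow_mul, mul_comm k N]
    have e1 : ((V⁻¹ : (PowerSeries S)ˣ) : PowerSeries S) ^ N
          * (((V : PowerSeries S) * X ^ k) ^ N * (q - C (c N)))
        = (X : PowerSeries S) ^ (N * k) * (q - C (c N)) := by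
      rw [hZN, mul_assoc ((V : PowerSeries S) ^ N), ← mul_assoc, hVV, one_mul]
    have hq2 : ∀ m, m < k → PowerSeries.coeff m (q - C (c N)) = 0 := by
      intro m hm
      have h0 := PowerSeries.X_pow_dvd_iff.mp hdvd2 (m + N * k)
        (by rw [Nat.succ_mul]; omega)
      calc PowerSeries.coeff m (q - C (c N))
          = PowerSeries.coeff (m + N * k)
              ((X : PowerSeries S) ^ (N * k) * (q - C (c N))) :=
            (PowerSeries.coeff_X_pow_mul _ _ _).symm
        _ = 0 := by rw [← e1]; exact h0
    obtain ⟨w, hw⟩ := PowerSeries.X_pow_dvd_iff.mpr hq2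
    refine ⟨((V⁻¹ : (PowerSeries S)ˣ) : PowerSeries S) * w, ?_⟩
    have hz : ((V : PowerSeries S) * X ^ k)
        * (((V⁻¹ : (PowerSeries S)ˣ) : PowerSeries S) * w) = X ^ k * w := by
      rw [mul_mul_mul_comm, Units.mul_inv, one_mul]
    have hqw : q = C (c N)
        + ((V : PowerSeries S) * X ^ k) * (((V⁻¹ : (PowerSeries S)ˣ) : PowerSeries S) * w) := by
      rw [hz, ← hw]; ring
    rw [Finset.sum_range_succ, hq, hqw]; ring

private lemma aux_vanish {S : Type*} [CommRing S] [IsDomain S] (V : (PowerSeries S)ˣ)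
    (k : ℕ) (hk : 0 < k) (c : ℕ → S) (j : ℕ)
    (h : ∀ m, m < j * k → PowerSeries.coeff m
        (∑ i ∈ Finset.range j, C (c i) * ((V : PowerSeries S) * X ^ k) ^ i) = 0) :
    ∀ i, i < j → c i = 0 := by
  intro i
  induction i using Nat.strong_induction_on with
  | _ i ih =>
    intro hij
    have hm : i * k < j * k := aux_nat_mul_lt k hij hk
    have h0 := h (i * k) hm
    rw [map_sum] at h0
    have hs : (∑ b ∈ Finset.range j, PowerSeries.coeff (i * k)
          (C (c b) * ((V : PowerSeries S) * X ^ k) ^ b))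
        = PowerSeries.coeff (i * k) (C (c i) * ((V : PowerSeries S) * X ^ k) ^ i) := by
      refine Finset.sum_eq_single i ?_ ?_
      · intro b hb hbne
        rcases lt_or_gt_of_ne hbne with hlt | hgt
        · rw [ih b hlt (lt_trans hlt hij), map_zero, zero_mul, map_zero]
        · rw [mul_comm (C (c b))]
          exact aux_coeff_pow_mul_eq_zero _ k b (i * k) _ (aux_nat_mul_lt k hgt hk)
      · intro hni
        exact absurd (Finset.mem_range.mpr hij) hni
    rw [hs] at h0
    have hZi : ((V : PowerSeries S) * X ^ k) ^ i
        = (V : PowerSeries S) ^ i * X ^ (i * k) := by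
      rw [mul_pow, ← pow_mul, mul_comm k i]
    rw [hZi, ← mul_assoc] at h0
    have h1 : PowerSeries.coeff (i * k)
        ((C (c i) * (V : PowerSeries S) ^ i) * X ^ (i * k))
        = PowerSeries.coeff 0 (C (c i) * (V : PowerSeries S) ^ i) := by
      have := PowerSeries.coeff_mul_X_pow (C (c i) * (V : PowerSeries S) ^ i) (i * k) 0
      simpa using this
    rw [h1] at h0
    rw [PowerSeries.coeff_zero_eq_constantCoeff, map_mul, PowerSeries.constantCoeff_C,
      map_pow] at h0
    have hunit : IsUnit (PowerSeries.constantCoeff (V : PowerSeries S)) :=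
      PowerSeries.isUnit_constantCoeff _ V.isUnit
    have hne : (PowerSeries.constantCoeff (V : PowerSeries S)) ^ i ≠ 0 :=
      pow_ne_zero _ hunit.ne_zero
    exact (mul_eq_zero.mp h0).resolve_right hne

end Aux

/-- Let `R` be a DVR with fraction field `Q`, and `G` a finite
group acting on `R[[X]]` by `R`-algebra automorphisms with `g(X) = (unit)·X`,
the action extending to `Q((X))`.  If the invariants of `Q((X))` are exactly
`Q((Y))` with `Y = ∏_{g ∈ G} g(X)` (an element `F` lies in `Q((Y))` iff
`(ιY)^j · F ∈ Q[[Y]]` for some `j`, coefficientwise), then `R[[X]]^G = R[[Y]]`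
(again expressed coefficientwise). -/
theorem invariants_of_power_series_over_dvr
    (R : Type*) [CommRing R] [IsDomain R] [IsDiscreteValuationRing R]
    (Q : Type*) [Field Q] [Algebra R Q] [IsFractionRing R Q]
    (G : Type*) [Group G] [Fintype G]
    (ρ : G →* (PowerSeries R ≃ₐ[R] PowerSeries R))
    (hX : ∀ g : G, ∃ u : (PowerSeries R)ˣ,
      ρ g PowerSeries.X = (u : PowerSeries R) * PowerSeries.X)
    (σ : G →* RingAut (LaurentSeries Q))
    (ι : PowerSeries R →+* LaurentSeries Q)
    (hι : ι = (HahnSeries.ofPowerSeries ℤ Q).comp (PowerSeries.map (algebraMap R Q)))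
    (hcompat : ∀ (g : G) (fs : PowerSeries R), σ g (ι fs) = ι (ρ g fs))
    (Y : PowerSeries R) (hY : Y = ∏ g : G, ρ g PowerSeries.X)
    (hfix : ∀ F : LaurentSeries Q, (∀ g : G, σ g F = F) ↔
      ∃ (j : ℕ) (c : ℕ → Q), ∀ n : ℤ,
        ((ι Y) ^ j * F).coeff n =
          (∑ i ∈ Finset.range (n.toNat + 1), HahnSeries.C (c i) * (ι Y) ^ i).coeff n)
    (f : PowerSeries R) :
    (∀ g : G, ρ g f = f) ↔
      ∃ c : ℕ → R, ∀ n : ℕ, PowerSeries.coeff n f =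
        PowerSeries.coeff n (∑ i ∈ Finset.range (n + 1), PowerSeries.C (c i) * Y ^ i) := by
  classical
  choose u hu using hX
  set k := Fintype.card G with hkdef
  have hkpos : 0 < k := Fintype.card_pos
  set U : (PowerSeries R)ˣ := ∏ g : G, u g with hUdef
  have hYU : Y = (U : PowerSeries R) * X ^ k := by
    rw [hY]
    calc ∏ g : G, ρ g X = ∏ g : G, ((u g : PowerSeries R) * X) :=
          Finset.prod_congr rfl fun g _ => hu g
      _ = (∏ g : G, (u g : PowerSeries R)) * ∏ _g : G, (X : PowerSeries R) :=
          Finset.prod_mul_distrib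
      _ = (U : PowerSeries R) * X ^ k := by
          rw [Finset.prod_const, Finset.card_univ]
          exact congrArg (· * X ^ Fintype.card G)
            (map_prod (Units.coeHom (PowerSeries R)) u Finset.univ).symm
  have hρC : ∀ (g : G) (r : R), ρ g (C r) = C r := by
    intro g r
    have h1 : (C r : PowerSeries R) = algebraMap R (PowerSeries R) r := by
      rw [PowerSeries.algebraMap_apply]; simp
    rw [h1, AlgEquiv.commutes]
  have hYinv : ∀ g : G, ρ g Y = Y := by
    intro g
    rw [hY, map_prod]
    have h1 : ∀ h : G, ρ g (ρ h X) = ρ (g * h) X := fun h => by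
      rw [map_mul ρ, AlgEquiv.mul_apply]
    calc ∏ h : G, ρ g (ρ h X) = ∏ h : G, ρ (g * h) X :=
          Finset.prod_congr rfl fun h _ => h1 h
      _ = ∏ h : G, ρ h X := Equiv.prod_comp (Equiv.mulLeft g) (fun h => ρ h X)
  have hYne : Y ≠ 0 := by
    rw [hYU]
    exact fun h => pow_ne_zero k (PowerSeries.X_ne_zero (R := R))
      ((U.mul_right_eq_zero).mp h)
  constructor
  · -- forward direction
    intro hf
    -- the key step lemma
    have step : ∀ f' : PowerSeries R, (∀ g : G, ρ g f' = f') →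
        ∃ f'' : PowerSeries R,
          f' = C (PowerSeries.constantCoeff f') + Y * f'' ∧ ∀ g : G, ρ g f'' = f'' := by
      intro f' hf'
      have hσ : ∀ g : G, σ g (ι f') = ι f' := fun g => by rw [hcompat, hf']
      obtain ⟨j, c, hcoeff⟩ := (hfix (ι f')).mp hσ
      have hVQ : ∃ VQ : (PowerSeries Q)ˣ,
          (VQ : PowerSeries Q) = PowerSeries.map (algebraMap R Q) (U : PowerSeries R) :=
        ⟨Units.map (PowerSeries.map (algebraMap R Q)).toMonoidHom U, rfl⟩
      obtain ⟨VQ, hVQ⟩ := hVQ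
      have hZmap : PowerSeries.map (algebraMap R Q) Y = (VQ : PowerSeries Q) * X ^ k := by
        rw [hYU, map_mul, map_pow, PowerSeries.map_X, hVQ]
      have hιY : ι Y = HahnSeries.ofPowerSeries ℤ Q ((VQ : PowerSeries Q) * X ^ k) := by
        rw [hι, RingHom.comp_apply, hZmap]
      -- translation of the coefficient condition
      have hP : ∀ m : ℕ, PowerSeries.coeff m
            (((VQ : PowerSeries Q) * X ^ k) ^ j * PowerSeries.map (algebraMap R Q) f')
          = PowerSeries.coeff m
            (∑ i ∈ Finset.range (m + 1), C (c i) * ((VQ : PowerSeries Q) * X ^ k) ^ i) := by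
        intro m
        have h1 := hcoeff (m : ℤ)
        rw [Int.toNat_natCast] at h1
        have hL : (ι Y) ^ j * ι f'
            = HahnSeries.ofPowerSeries ℤ Q (((VQ : PowerSeries Q) * X ^ k) ^ j * PowerSeries.map (algebraMap R Q) f') := by
          rw [map_mul, map_pow, ← hιY, hι]
          rfl
        have hR : (∑ i ∈ Finset.range (m + 1), HahnSeries.C (c i) * (ι Y) ^ i)
            = HahnSeries.ofPowerSeries ℤ Q
                (∑ i ∈ Finset.range (m + 1), C (c i) * ((VQ : PowerSeries Q) * X ^ k) ^ i) := by
          rw [map_sum]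
          refine Finset.sum_congr rfl fun i _ => ?_
          rw [map_mul, map_pow, HahnSeries.ofPowerSeries_C, ← hιY]
        rw [hL, hR, HahnSeries.ofPowerSeries_apply_coeff, HahnSeries.ofPowerSeries_apply_coeff]
          at h1
        exact h1
      obtain ⟨q, hq⟩ := aux_rep VQ k hkpos c _ hP (j + 1)
      have hzero : ∀ i, i < j → c i = 0 := by
        refine aux_vanish VQ k hkpos c j ?_
        intro m hm
        have hsum : ∑ i ∈ Finset.range j, C (c i) * ((VQ : PowerSeries Q) * X ^ k) ^ i
            = ((VQ : PowerSeries Q) * X ^ k) ^ j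
                * (PowerSeries.map (algebraMap R Q) f' - ((VQ : PowerSeries Q) * X ^ k) * q)
              - C (c j) * ((VQ : PowerSeries Q) * X ^ k) ^ j := by
          have h2 := hq
          rw [Finset.sum_range_succ] at h2
          linear_combination -h2
        rw [hsum, map_sub, aux_coeff_pow_mul_eq_zero _ k j m _ hm,
          mul_comm (C (c j)), aux_coeff_pow_mul_eq_zero _ k j m _ hm, sub_zero]
      have hsum0 : ∑ i ∈ Finset.range j, C (c i) * ((VQ : PowerSeries Q) * X ^ k) ^ i = 0 :=
        Finset.sum_eq_zero fun i hi => by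
          rw [hzero i (Finset.mem_range.mp hi), map_zero, zero_mul]
      have hq2 : ((VQ : PowerSeries Q) * X ^ k) ^ j * PowerSeries.map (algebraMap R Q) f'
          = ((VQ : PowerSeries Q) * X ^ k) ^ j
              * (C (c j) + ((VQ : PowerSeries Q) * X ^ k) * q) := by
        have h2 := hq
        rw [Finset.sum_range_succ, hsum0, zero_add] at h2
        rw [h2]; ring
      have hZne : ((VQ : PowerSeries Q) * X ^ k) ≠ 0 := fun h =>
        pow_ne_zero k (PowerSeries.X_ne_zero (R := Q)) ((VQ.mul_right_eq_zero).mp h)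
      have hmap : PowerSeries.map (algebraMap R Q) f' = C (c j) + ((VQ : PowerSeries Q) * X ^ k) * q :=
        mul_left_cancel₀ (pow_ne_zero _ hZne) hq2
      have hcj : c j = algebraMap R Q (PowerSeries.constantCoeff f') := by
        have h3 := congrArg (PowerSeries.constantCoeff (R := Q)) hmap
        rw [map_add, map_mul, map_mul, map_pow, PowerSeries.constantCoeff_X,
          zero_pow hkpos.ne', mul_zero, zero_mul, add_zero, PowerSeries.constantCoeff_C] at h3
        rw [← h3]
        rw [← PowerSeries.coeff_zero_eq_constantCoeff_apply, PowerSeries.coeff_map,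
          PowerSeries.coeff_zero_eq_constantCoeff_apply]
      have hvan : ∀ m, m < k →
          PowerSeries.coeff m (f' - C (PowerSeries.constantCoeff f')) = 0 := by
        intro m hm
        have h4 : PowerSeries.coeff m
            (PowerSeries.map (algebraMap R Q) (f' - C (PowerSeries.constantCoeff f'))) = 0 := by
          have h5 : PowerSeries.map (algebraMap R Q) (f' - C (PowerSeries.constantCoeff f'))
              = ((VQ : PowerSeries Q) * X ^ k) * q := by
            rw [map_sub, hmap, PowerSeries.map_C, ← hcj]
            ring
          rw [h5]
          have hdvd : (X : PowerSeries Q) ^ k ∣ ((VQ : PowerSeries Q) * X ^ k) * q :=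
            ⟨(VQ : PowerSeries Q) * q, by ring⟩
          exact PowerSeries.X_pow_dvd_iff.mp hdvd m hm
        rw [PowerSeries.coeff_map] at h4
        exact IsFractionRing.injective R Q (by rw [h4, map_zero])
      obtain ⟨h2, hh2⟩ := PowerSeries.X_pow_dvd_iff.mpr hvan
      refine ⟨((U⁻¹ : (PowerSeries R)ˣ) : PowerSeries R) * h2, ?_, ?_⟩
      · have hz : Y * (((U⁻¹ : (PowerSeries R)ˣ) : PowerSeries R) * h2) = X ^ k * h2 := by
          rw [hYU, mul_mul_mul_comm, Units.mul_inv, one_mul]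
        rw [hz, ← hh2]; ring
      · intro g
        have heq : f' = C (PowerSeries.constantCoeff f')
            + Y * (((U⁻¹ : (PowerSeries R)ˣ) : PowerSeries R) * h2) := by
          have hz : Y * (((U⁻¹ : (PowerSeries R)ˣ) : PowerSeries R) * h2) = X ^ k * h2 := by
            rw [hYU, mul_mul_mul_comm, Units.mul_inv, one_mul]
          rw [hz, ← hh2]; ring
        have h4 : C (PowerSeries.constantCoeff f')
              + Y * ρ g (((U⁻¹ : (PowerSeries R)ˣ) : PowerSeries R) * h2)
            = C (PowerSeries.constantCoeff f')
              + Y * (((U⁻¹ : (PowerSeries R)ˣ) : PowerSeries R) * h2) := by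
          calc C (PowerSeries.constantCoeff f')
                + Y * ρ g (((U⁻¹ : (PowerSeries R)ˣ) : PowerSeries R) * h2)
              = ρ g (C (PowerSeries.constantCoeff f')
                + Y * (((U⁻¹ : (PowerSeries R)ˣ) : PowerSeries R) * h2)) := by
                simp only [map_add, map_mul, hYinv, hρC]
            _ = ρ g f' := by rw [← heq]
            _ = f' := hf' g
            _ = _ := heq
        exact mul_left_cancel₀ hYne (add_left_cancel h4)
    -- build the sequence of quotients by recursion
    choose step2 hstep1 hstep2 using step
    let T : ℕ → {p : PowerSeries R // ∀ g : G, ρ g p = p} :=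
      fun n => Nat.rec (⟨f, hf⟩ : {p : PowerSeries R // ∀ g : G, ρ g p = p})
        (fun _ p => ⟨step2 p.1 p.2, hstep2 p.1 p.2⟩) n
    have hT : ∀ n : ℕ, (T n).1
        = C (PowerSeries.constantCoeff (T n).1) + Y * (T (n + 1)).1 :=
      fun n => hstep1 (T n).1 (T n).2
    refine ⟨fun n => PowerSeries.constantCoeff (T n).1, ?_⟩
    have hrep : ∀ N : ℕ, f = ∑ i ∈ Finset.range N,
        C (PowerSeries.constantCoeff (T i).1) * Y ^ i + Y ^ N * (T N).1 := by
      intro N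
      induction N with
      | zero => simp [T]
      | succ N ih =>
        rw [ih, Finset.sum_range_succ]
        have h7 : Y ^ N * (T N).1
            = Y ^ N * (C (PowerSeries.constantCoeff (T N).1) + Y * (T (N + 1)).1) := by
          rw [← hT N]
        rw [h7]; ring
    intro n
    have h5 := hrep (n + 1)
    have h6 : PowerSeries.coeff n (Y ^ (n + 1) * (T (n + 1)).1) = 0 := by
      rw [hYU]
      exact aux_coeff_pow_mul_eq_zero _ k (n + 1) n _
        (lt_of_lt_of_le (Nat.lt_succ_self n) (Nat.le_mul_of_pos_right _ hkpos))
    rw [h5, map_add, h6, add_zero]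
  · -- backward direction
    rintro ⟨c, hc⟩ g
    ext n
    have hvan : ∀ m, m < n + 1 →
        PowerSeries.coeff m (f - ∑ i ∈ Finset.range (n + 1), C (c i) * Y ^ i) = 0 := by
      intro m hm
      rw [map_sub, hc m, sub_eq_zero]
      have h1 := aux_coeff_partial_sum (U : PowerSeries R) k hkpos c m (m + 1) (n + 1)
        (lt_of_lt_of_le (Nat.lt_succ_self m) (Nat.le_mul_of_pos_right _ hkpos)) hm
      rw [← hYU] at h1
      exact h1
    obtain ⟨h1, hh1⟩ := PowerSeries.X_pow_dvd_iff.mpr hvan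
    have hfS : f = (∑ i ∈ Finset.range (n + 1), C (c i) * Y ^ i) + X ^ (n + 1) * h1 := by
      rw [← hh1]; ring
    have hSinv : ρ g (∑ i ∈ Finset.range (n + 1), C (c i) * Y ^ i)
        = ∑ i ∈ Finset.range (n + 1), C (c i) * Y ^ i := by
      rw [map_sum]
      refine Finset.sum_congr rfl fun i _ => ?_
      rw [map_mul, map_pow, hYinv g, hρC]
    have hc1 : PowerSeries.coeff n (ρ g (X ^ (n + 1) * h1)) = 0 := by
      have h2 : ρ g (X ^ (n + 1) * h1) = ((u g : PowerSeries R) * X) ^ (n + 1) * ρ g h1 := by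
        rw [map_mul, map_pow, hu g]
      have hdvd : (X : PowerSeries R) ^ (n + 1) ∣ ρ g (X ^ (n + 1) * h1) := by
        rw [h2, mul_pow]
        exact ⟨(u g : PowerSeries R) ^ (n + 1) * ρ g h1, by ring⟩
      exact PowerSeries.X_pow_dvd_iff.mp hdvd n (Nat.lt_succ_self n)
    have hc2 : PowerSeries.coeff n (X ^ (n + 1) * h1) = 0 := by
      exact PowerSeries.X_pow_dvd_iff.mp (dvd_mul_right _ h1) n (Nat.lt_succ_self n)
    calc PowerSeries.coeff n (ρ g f)
        = PowerSeries.coeff n (∑ i ∈ Finset.range (n + 1), C (c i) * Y ^ i) := by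
          rw [hfS, map_add, map_add, hSinv, hc1, add_zero]
      _ = PowerSeries.coeff n f := by
          conv_rhs => rw [hfS]
          rw [map_add, hc2, add_zero]
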